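/- Let X ⊆ ℕ and let (k_n)_{n ≥ 1} be a sequence of pairwise coprime positive integers. If the series ∑_{n ≥ 1} (1 − r_{k_n}(X)/k_n) diverges to infinity (in particular, if ∑_{n ≥ 1} 1/k_n = ∞ and r_{k_n}(X) ≤ k_n − 1 for every n ≥ 1), then X is small. -/

import Mathlib

open Set Filter Topology

/-- An upper quasi-density on ℕ. -/
def IsUpperQuasiDensity (μ : Set ℕ → ℝ) : Prop :=
  μ Set.univ = 1 ∧
  (∀ X : Set ℕ, μ X ≤ 1) ∧
  (∀ X Y : Set ℕ, μ (X ∪ Y) ≤ μ X + μ Y) ∧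
  (∀ (X : Set ℕ) (k : ℕ), 0 < k → μ ((fun x => k * x) '' X) = μ X / k) ∧
  (∀ (X : Set ℕ) (h : ℕ), μ ((fun x => x + h) '' X) = μ X)

/-- An upper density on ℕ: a monotone upper quasi-density. -/
def IsUpperDensity (μ : Set ℕ → ℝ) : Prop :=
  IsUpperQuasiDensity μ ∧ ∀ X Y : Set ℕ, X ⊆ Y → μ X ≤ μ Y

/-- A set of naturals is small if every upper quasi-density vanishes on it. -/
def SmallSet (X : Set ℕ) : Prop :=
  ∀ μ : Set ℕ → ℝ, IsUpperQuasiDensity μ → μ X = 0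

/-- The upper asymptotic density of a set of naturals. -/
noncomputable def upperAsymptoticDensity (X : Set ℕ) : ℝ :=
  limsup (fun n : ℕ => ((X ∩ Set.Icc 1 n).ncard : ℝ) / n) atTop

/-- The arithmetic progression k·ℕ + h. -/
def AP (k h : ℕ) : Set ℕ := {x : ℕ | ∃ m : ℕ, x = k * m + h}

/-- A finite union of arithmetic progressions of ℕ. -/
def IsFinUnionAP (A : Set ℕ) : Prop :=
  ∃ s : Finset (ℕ × ℕ), (∀ p ∈ s, 0 < p.1) ∧ A = ⋃ p ∈ s, AP p.1 p.2

/-- The upper Buck density of a set of naturals. -/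
noncomputable def buckDensity (X : Set ℕ) : ℝ :=
  sInf {d : ℝ | ∃ A : Set ℕ, IsFinUnionAP A ∧ X ⊆ A ∧ d = upperAsymptoticDensity A}

/-- `rk k X` is the number of residues h ∈ [0, k-1] with X ∩ (k·ℕ + h) ≠ ∅. -/
noncomputable def rk (k : ℕ) (X : Set ℕ) : ℕ :=
  {h : ℕ | h < k ∧ (X ∩ AP k h).Nonempty}.ncard

/-- `wk μ k S` is the number of residues h ∈ [0, k-1] with μ(S ∩ (k·ℕ + h)) ≠ 0. -/
noncomputable def wk (μ : Set ℕ → ℝ) (k : ℕ) (S : Set ℕ) : ℕ :=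
  {h : ℕ | h < k ∧ μ (S ∩ AP k h) ≠ 0}.ncard

open scoped Classical in
lemma rk_eq_card (K : ℕ) (X : Set ℕ) :
    rk K X = ((Finset.range K).filter (fun h => (X ∩ AP K h).Nonempty)).card := by
  rw [rk, ← Set.ncard_coe_finset]
  congr 1
  ext h
  simp [Finset.mem_filter, Finset.mem_range, and_comm]

lemma uqd_empty {μ : Set ℕ → ℝ} (hμ : IsUpperQuasiDensity μ) : μ ∅ = 0 := by
  have := hμ.2.2.2.1 ∅ 2 (by norm_num)
  simp only [Set.image_empty] at this
  linarith

lemma uqd_nonneg {μ : Set ℕ → ℝ} (hμ : IsUpperQuasiDensity μ) (X : Set ℕ) : 0 ≤ μ X := by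
  have h := hμ.2.2.1 X Xᶜ
  rw [Set.union_compl_self, hμ.1] at h
  have := hμ.2.1 Xᶜ
  linarith

lemma uqd_subset_ap {μ : Set ℕ → ℝ} (hμ : IsUpperQuasiDensity μ) {K hh : ℕ} (hK : 0 < K)
    {Y : Set ℕ} (hY : Y ⊆ AP K hh) : μ Y ≤ 1 / K := by
  set Z : Set ℕ := {m | K * m + hh ∈ Y} with hZ
  have hYeq : Y = (fun x => x + hh) '' ((fun x => K * x) '' Z) := by
    ext y
    simp only [Set.mem_image, hZ, Set.mem_setOf_eq]
    constructor
    · intro hy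
      obtain ⟨m, rfl⟩ := hY hy
      exact ⟨K * m, ⟨m, hy, rfl⟩, rfl⟩
    · rintro ⟨_, ⟨m, hm, rfl⟩, rfl⟩
      exact hm
  rw [hYeq, hμ.2.2.2.2, hμ.2.2.2.1 Z K hK]
  have h1 := hμ.2.1 Z
  have hKpos : (0:ℝ) < K := by exact_mod_cast hK
  gcongr

lemma uqd_biUnion {μ : Set ℕ → ℝ} (hμ : IsUpperQuasiDensity μ) (s : Finset ℕ) (f : ℕ → Set ℕ) :
    μ (⋃ i ∈ s, f i) ≤ ∑ i ∈ s, μ (f i) := by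
  classical
  induction s using Finset.induction_on with
  | empty => simp [uqd_empty hμ]
  | insert _ _ h ih =>
      rename_i a s
      rw [Finset.set_biUnion_insert, Finset.sum_insert h]
      calc μ (f a ∪ ⋃ i ∈ s, f i) ≤ μ (f a) + μ (⋃ i ∈ s, f i) := hμ.2.2.1 _ _
        _ ≤ μ (f a) + ∑ i ∈ s, μ (f i) := by linarith

lemma mu_le_rk {μ : Set ℕ → ℝ} (hμ : IsUpperQuasiDensity μ) {K : ℕ} (hK : 0 < K)
    (X : Set ℕ) : μ X ≤ (rk K X : ℝ) / K := by
  classical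
  have hcover : X = ⋃ h ∈ Finset.range K, (X ∩ AP K h) := by
    ext x
    simp only [Set.mem_iUnion, Finset.mem_range, Set.mem_inter_iff]
    constructor
    · intro hx
      exact ⟨x % K, Nat.mod_lt x hK, hx, ⟨x / K, by rw [Nat.div_add_mod]⟩⟩
    · rintro ⟨h, -, hx, -⟩
      exact hx
  set S := (Finset.range K).filter (fun h => (X ∩ AP K h).Nonempty) with hS
  calc μ X ≤ ∑ h ∈ Finset.range K, μ (X ∩ AP K h) := by
        conv_lhs => rw [hcover]
        exact uqd_biUnion hμ _ _
    _ = ∑ h ∈ S, μ (X ∩ AP K h) := by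
        rw [← Finset.sum_filter_add_sum_filter_not (Finset.range K)
          (fun h => (X ∩ AP K h).Nonempty), hS]
        have hz : ∀ h ∈ (Finset.range K).filter (fun h => ¬ (X ∩ AP K h).Nonempty),
            μ (X ∩ AP K h) = 0 := by
          intro h hh
          simp only [Finset.mem_filter, Set.not_nonempty_iff_eq_empty] at hh
          rw [hh.2, uqd_empty hμ]
        rw [Finset.sum_eq_zero hz, add_zero]
    _ ≤ ∑ _h ∈ S, (1 / K : ℝ) :=
        Finset.sum_le_sum (fun h _ => uqd_subset_ap hμ hK Set.inter_subset_right)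
    _ = (S.card : ℝ) * (1 / K) := by rw [Finset.sum_const, nsmul_eq_mul]
    _ = (rk K X : ℝ) / K := by rw [rk_eq_card]; ring

lemma AP_mul_subset {a b h : ℕ} : AP (a * b) h ⊆ AP a (h % a) := by
  rintro x ⟨m, rfl⟩
  exact ⟨b * m + h / a, by
    rw [Nat.mul_add, ← Nat.mul_assoc, Nat.add_assoc, Nat.div_add_mod]⟩

lemma rk_mul_le {a b : ℕ} (ha : 0 < a) (hb : 0 < b) (hab : Nat.Coprime a b) (X : Set ℕ) :
    rk (a * b) X ≤ rk a X * rk b X := by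
  classical
  rw [rk_eq_card, rk_eq_card, rk_eq_card, ← Finset.card_product]
  apply Finset.card_le_card_of_injOn (fun h => (h % a, h % b))
  · intro h hh
    simp only [Finset.mem_coe, Finset.mem_filter, Finset.mem_range] at hh
    obtain ⟨hlt, x, hxX, hxAP⟩ := hh
    simp only [Finset.mem_coe, Finset.mem_product, Finset.mem_filter, Finset.mem_range]
    refine ⟨⟨Nat.mod_lt _ ha, x, hxX, AP_mul_subset hxAP⟩,
      ⟨Nat.mod_lt _ hb, x, hxX, ?_⟩⟩
    rw [Nat.mul_comm] at hxAP
    exact AP_mul_subset hxAP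
  · intro h1 hh1 h2 hh2 heq
    simp only [Finset.coe_filter, Finset.mem_range, Set.mem_setOf_eq] at hh1 hh2
    have e1 : h1 % a = h2 % a := congrArg Prod.fst heq
    have e2 : h1 % b = h2 % b := congrArg Prod.snd heq
    have hmod : h1 ≡ h2 [MOD a * b] :=
      (Nat.modEq_and_modEq_iff_modEq_mul hab).mp ⟨e1, e2⟩
    rwa [Nat.ModEq, Nat.mod_eq_of_lt hh1.1, Nat.mod_eq_of_lt hh2.1] at hmod

lemma rk_le (K : ℕ) (X : Set ℕ) : rk K X ≤ K := by
  classical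
  rw [rk_eq_card]
  exact le_trans (Finset.card_filter_le _ _) (by simp)

lemma rk_prod_le (k : ℕ → ℕ) (hpos : ∀ n, 0 < k n)
    (hcop : ∀ m n, m ≠ n → Nat.Coprime (k m) (k n)) (X : Set ℕ) (N : ℕ) :
    rk (∏ i ∈ Finset.range N, k i) X ≤ ∏ i ∈ Finset.range N, rk (k i) X := by
  induction N with
  | zero => simpa using rk_le 1 X
  | succ n ih =>
      rw [Finset.prod_range_succ, Finset.prod_range_succ]
      have hcp : Nat.Coprime (∏ i ∈ Finset.range n, k i) (k n) :=
        Nat.Coprime.prod_left (fun i hi => hcop i n (by simp at hi; omega))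
      calc rk ((∏ i ∈ Finset.range n, k i) * k n) X
          ≤ rk (∏ i ∈ Finset.range n, k i) X * rk (k n) X :=
            rk_mul_le (Finset.prod_pos (fun i _ => hpos i)) (hpos n) hcp X
        _ ≤ _ := Nat.mul_le_mul_right _ ih

lemma exp_bound_aux (X : Set ℕ) (k : ℕ → ℕ) (hpos : ∀ n, 0 < k n)
    (hcop : ∀ m n, m ≠ n → Nat.Coprime (k m) (k n))
    {μ : Set ℕ → ℝ} (hμ : IsUpperQuasiDensity μ) (N : ℕ) :
    μ X ≤ Real.exp (-(∑ i ∈ Finset.range N, (1 - (rk (k i) X : ℝ) / (k i : ℝ)))) := by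
  have hKpos : 0 < ∏ i ∈ Finset.range N, k i := Finset.prod_pos fun i _ => hpos i
  have hden : ((∏ i ∈ Finset.range N, k i : ℕ) : ℝ) = ∏ i ∈ Finset.range N, (k i : ℝ) := by
    push_cast; rfl
  calc μ X ≤ (rk (∏ i ∈ Finset.range N, k i) X : ℝ) / (∏ i ∈ Finset.range N, k i : ℕ) :=
        mu_le_rk hμ hKpos X
    _ ≤ (∏ i ∈ Finset.range N, (rk (k i) X : ℝ)) / (∏ i ∈ Finset.range N, (k i : ℝ)) := by
        rw [hden]
        have hdenpos : (0:ℝ) < ∏ i ∈ Finset.range N, (k i : ℝ) := by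
          rw [← hden]; exact_mod_cast hKpos
        gcongr
        exact_mod_cast rk_prod_le k hpos hcop X N
    _ = ∏ i ∈ Finset.range N, ((rk (k i) X : ℝ) / (k i : ℝ)) := by
        rw [Finset.prod_div_distrib]
    _ ≤ ∏ i ∈ Finset.range N, Real.exp (-(1 - (rk (k i) X : ℝ) / (k i : ℝ))) := by
        apply Finset.prod_le_prod
        · intro i _; positivity
        · intro i _
          have h := Real.add_one_le_exp (-(1 - (rk (k i) X : ℝ) / (k i : ℝ)))
          linarith
    _ = Real.exp (-(∑ i ∈ Finset.range N, (1 - (rk (k i) X : ℝ) / (k i : ℝ)))) := by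
        rw [← Real.exp_sum, ← Finset.sum_neg_distrib]


/-- If the series ∑ (1 - r_{k_n}(X)/k_n) diverges (in particular, if ∑ 1/k_n = ∞
and r_{k_n}(X) ≤ k_n - 1 for every n), then X is small. -/
theorem modular_criterion_small (X : Set ℕ) (k : ℕ → ℕ) (hpos : ∀ n, 0 < k n)
    (hcop : ∀ m n, m ≠ n → Nat.Coprime (k m) (k n)) :
    (Tendsto (fun n : ℕ =>
        ∑ i ∈ Finset.range n, (1 - (rk (k i) X : ℝ) / (k i : ℝ))) atTop atTop →
      SmallSet X) ∧
    ((Tendsto (fun n : ℕ => ∑ i ∈ Finset.range n, (1 : ℝ) / (k i : ℝ)) atTop atTop ∧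
        ∀ n : ℕ, rk (k n) X ≤ k n - 1) →
      SmallSet X) := by
  have main : Tendsto (fun n : ℕ =>
      ∑ i ∈ Finset.range n, (1 - (rk (k i) X : ℝ) / (k i : ℝ))) atTop atTop → SmallSet X := by
    intro htend μ hμ
    have hexp : Tendsto (fun N : ℕ => Real.exp
        (-(∑ i ∈ Finset.range N, (1 - (rk (k i) X : ℝ) / (k i : ℝ))))) atTop (𝓝 0) :=
      Real.tendsto_exp_atBot.comp (tendsto_neg_atBot_iff.mpr htend)
    have hle : μ X ≤ 0 :=
      ge_of_tendsto' hexp (fun N => exp_bound_aux X k hpos hcop hμ N)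
    exact le_antisymm hle (uqd_nonneg hμ X)
  refine ⟨main, fun ⟨htend, hrk⟩ => main ?_⟩
  apply tendsto_atTop_mono _ htend
  intro n
  apply Finset.sum_le_sum
  intro i _
  have hki : (1:ℝ) ≤ (k i : ℝ) := by exact_mod_cast hpos i
  have hkpos : (0:ℝ) < (k i : ℝ) := by linarith
  have h1 : (rk (k i) X : ℝ) ≤ (k i : ℝ) - 1 := by
    have := hrk i
    have h2 : (rk (k i) X : ℝ) ≤ ((k i - 1 : ℕ) : ℝ) := by exact_mod_cast this
    have h3 : ((k i - 1 : ℕ) : ℝ) = (k i : ℝ) - 1 := by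
      have := hpos i
      push_cast [Nat.cast_sub this]
      ring
    linarith
  have key : 1 / (k i : ℝ) + (rk (k i) X : ℝ) / (k i : ℝ) ≤ 1 := by
    rw [← add_div, div_le_one hkpos]
    linarith
  linarith
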